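/- Let p₁, …, p₈ be nonnegative reals summing to 1, and let ρ = ∑_{i=1}^8 p_i |GHZ_i⟩⟨GHZ_i| be the GHZ diagonal state on ℂ²⊗ℂ²⊗ℂ² built from the eight GHZ vectors |GHZ₁⟩=(e₀₀₀+e₁₁₁)/√2, |GHZ₂⟩=(e₀₀₀−e₁₁₁)/√2, |GHZ₃⟩=(e₁₀₀+e₀₁₁)/√2, |GHZ₄⟩=(e₁₀₀−e₀₁₁)/√2, |GHZ₅⟩=(e₀₁₀+e₁₀₁)/√2, |GHZ₆⟩=(e₀₁₀−e₁₀₁)/√2, |GHZ₇⟩=(e₁₁₀+e₀₀₁)/√2, |GHZ₈⟩=(e₁₁₀−e₀₀₁)/√2. Let O₁=Z⊗Z⊗1, O₂=Z⊗1⊗Z, O₃=1⊗Z⊗Z, O₄=X⊗X⊗X, O₅=−Y⊗Y⊗X, O₆=−Y⊗X⊗Y, O₇=−X⊗Y⊗Y. Then max_i p_i > 1/2 if and only if ∑_{i=1}^7 |tr(ρ O_i)| > 3. -/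

import Mathlib

open Matrix Kronecker

noncomputable section

/-- The Pauli matrix X. -/
def PauliX : Matrix (Fin 2) (Fin 2) ℂ := !![0, 1; 1, 0]

/-- The Pauli matrix Y. -/
def PauliY : Matrix (Fin 2) (Fin 2) ℂ := !![0, -Complex.I; Complex.I, 0]

/-- The Pauli matrix Z. -/
def PauliZ : Matrix (Fin 2) (Fin 2) ℂ := !![1, 0; 0, -1]

/-- The standard basis vector `e_{abc}` of ℂ²⊗ℂ²⊗ℂ². -/
def eVec (x : Fin 2 × Fin 2 × Fin 2) : Fin 2 × Fin 2 × Fin 2 → ℂ :=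
  fun p => if p = x then 1 else 0

/-- The eight GHZ vectors. -/
def ghzVec : Fin 8 → (Fin 2 × Fin 2 × Fin 2 → ℂ) :=
  ![fun p => (eVec (0, 0, 0) p + eVec (1, 1, 1) p) / (Real.sqrt 2 : ℂ),
    fun p => (eVec (0, 0, 0) p - eVec (1, 1, 1) p) / (Real.sqrt 2 : ℂ),
    fun p => (eVec (1, 0, 0) p + eVec (0, 1, 1) p) / (Real.sqrt 2 : ℂ),
    fun p => (eVec (1, 0, 0) p - eVec (0, 1, 1) p) / (Real.sqrt 2 : ℂ),
    fun p => (eVec (0, 1, 0) p + eVec (1, 0, 1) p) / (Real.sqrt 2 : ℂ),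
    fun p => (eVec (0, 1, 0) p - eVec (1, 0, 1) p) / (Real.sqrt 2 : ℂ),
    fun p => (eVec (1, 1, 0) p + eVec (0, 0, 1) p) / (Real.sqrt 2 : ℂ),
    fun p => (eVec (1, 1, 0) p - eVec (0, 0, 1) p) / (Real.sqrt 2 : ℂ)]

/-- The GHZ diagonal state with mixing weights `p`. -/
def ghzDiagState (p : Fin 8 → ℝ) :
    Matrix (Fin 2 × Fin 2 × Fin 2) (Fin 2 × Fin 2 × Fin 2) ℂ :=
  ∑ i, (p i : ℂ) • Matrix.vecMulVec (ghzVec i) (star (ghzVec i))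

/-- The seven stabilizer observables ZZ1, Z1Z, 1ZZ, XXX, −YYX, −YXY, −XYY. -/
def stabOp : Fin 7 → Matrix (Fin 2 × Fin 2 × Fin 2) (Fin 2 × Fin 2 × Fin 2) ℂ :=
  ![PauliZ ⊗ₖ (PauliZ ⊗ₖ (1 : Matrix (Fin 2) (Fin 2) ℂ)),
    PauliZ ⊗ₖ ((1 : Matrix (Fin 2) (Fin 2) ℂ) ⊗ₖ PauliZ),
    (1 : Matrix (Fin 2) (Fin 2) ℂ) ⊗ₖ (PauliZ ⊗ₖ PauliZ),
    PauliX ⊗ₖ (PauliX ⊗ₖ PauliX),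
    -(PauliY ⊗ₖ (PauliY ⊗ₖ PauliX)),
    -(PauliY ⊗ₖ (PauliX ⊗ₖ PauliY)),
    -(PauliX ⊗ₖ (PauliY ⊗ₖ PauliY))]

lemma qf (x y : Fin 2 × Fin 2 × Fin 2) (c : ℝ)
    (O : Matrix (Fin 2 × Fin 2 × Fin 2) (Fin 2 × Fin 2 × Fin 2) ℂ) :
    star (fun p => (eVec x p + (c : ℂ) * eVec y p) / (Real.sqrt 2 : ℂ)) ⬝ᵥ
      (O *ᵥ fun p => (eVec x p + (c : ℂ) * eVec y p) / (Real.sqrt 2 : ℂ)) =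
      (O x x + (c : ℂ) * O x y + (c : ℂ) * O y x + (c : ℂ)^2 * O y y) / 2 := by
  have h2 : ((Real.sqrt 2 : ℝ) : ℂ) * ((Real.sqrt 2 : ℝ) : ℂ) = 2 := by
    rw [← Complex.ofReal_mul, Real.mul_self_sqrt (by norm_num)]; norm_num
  have h2' : (Real.sqrt 2 : ℂ) ≠ 0 := by
    intro h
    rw [Complex.ofReal_eq_zero] at h
    exact absurd h (Real.sqrt_ne_zero'.mpr (by norm_num))
  have hx : eVec x = Pi.single x (1:ℂ) := by
    funext q; simp [eVec, Pi.single_apply]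
  have hy : eVec y = Pi.single y (1:ℂ) := by
    funext q; simp [eVec, Pi.single_apply]
  have hv : (fun p => (eVec x p + (c : ℂ) * eVec y p) / (Real.sqrt 2 : ℂ)) =
      ((Real.sqrt 2 : ℂ))⁻¹ • ((Pi.single x (1:ℂ) : (Fin 2 × Fin 2 × Fin 2) → ℂ) + (c : ℂ) • (Pi.single y (1:ℂ) : (Fin 2 × Fin 2 × Fin 2) → ℂ)) := by
    funext q; simp [hx, hy, div_eq_inv_mul]; try ring
  rw [hv]
  simp only [star_smul, star_add, star_smul, smul_dotProduct, dotProduct_smul,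
    Matrix.mulVec_smul, add_dotProduct, dotProduct_add, Matrix.mulVec_add,
    Matrix.mulVec_single, single_dotProduct, star_one, one_mul, mul_one,
    Pi.star_apply, RCLike.star_def, Complex.conj_ofReal, map_inv₀, smul_eq_mul]
  have hsx : star (Pi.single x (1:ℂ) : (Fin 2 × Fin 2 × Fin 2) → ℂ) = Pi.single x 1 := by
    funext q; simp [Pi.single_apply, apply_ite (starRingEnd ℂ)]
  have hsy : star (Pi.single y (1:ℂ) : (Fin 2 × Fin 2 × Fin 2) → ℂ) = Pi.single y 1 := by
    funext q; simp [Pi.single_apply, apply_ite (starRingEnd ℂ)]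
  simp only [hsx, hsy, single_dotProduct, one_mul, MulOpposite.op_one, one_smul, Matrix.col_apply]
  field_simp
  ring_nf
  linear_combination (-(O x x + (c:ℂ)*O x y + (c:ℂ)*O y x + (c:ℂ)^2*O y y)) * h2
lemma ghz_eq_0 : ghzVec 0 = fun p => (eVec (0, 0, 0) p + ((1:ℝ) : ℂ) * eVec (1, 1, 1) p) / (Real.sqrt 2 : ℂ) := by
  funext q
  show (eVec (0, 0, 0) q + eVec (1, 1, 1) q) / (Real.sqrt 2 : ℂ) = _
  push_cast
  ring

lemma ghz_eq_1 : ghzVec 1 = fun p => (eVec (0, 0, 0) p + ((-1:ℝ) : ℂ) * eVec (1, 1, 1) p) / (Real.sqrt 2 : ℂ) := by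
  funext q
  show (eVec (0, 0, 0) q - eVec (1, 1, 1) q) / (Real.sqrt 2 : ℂ) = _
  push_cast
  ring

lemma ghz_eq_2 : ghzVec 2 = fun p => (eVec (1, 0, 0) p + ((1:ℝ) : ℂ) * eVec (0, 1, 1) p) / (Real.sqrt 2 : ℂ) := by
  funext q
  show (eVec (1, 0, 0) q + eVec (0, 1, 1) q) / (Real.sqrt 2 : ℂ) = _
  push_cast
  ring

lemma ghz_eq_3 : ghzVec 3 = fun p => (eVec (1, 0, 0) p + ((-1:ℝ) : ℂ) * eVec (0, 1, 1) p) / (Real.sqrt 2 : ℂ) := by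
  funext q
  show (eVec (1, 0, 0) q - eVec (0, 1, 1) q) / (Real.sqrt 2 : ℂ) = _
  push_cast
  ring

lemma ghz_eq_4 : ghzVec 4 = fun p => (eVec (0, 1, 0) p + ((1:ℝ) : ℂ) * eVec (1, 0, 1) p) / (Real.sqrt 2 : ℂ) := by
  funext q
  show (eVec (0, 1, 0) q + eVec (1, 0, 1) q) / (Real.sqrt 2 : ℂ) = _
  push_cast
  ring

lemma ghz_eq_5 : ghzVec 5 = fun p => (eVec (0, 1, 0) p + ((-1:ℝ) : ℂ) * eVec (1, 0, 1) p) / (Real.sqrt 2 : ℂ) := by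
  funext q
  show (eVec (0, 1, 0) q - eVec (1, 0, 1) q) / (Real.sqrt 2 : ℂ) = _
  push_cast
  ring

lemma ghz_eq_6 : ghzVec 6 = fun p => (eVec (1, 1, 0) p + ((1:ℝ) : ℂ) * eVec (0, 0, 1) p) / (Real.sqrt 2 : ℂ) := by
  funext q
  show (eVec (1, 1, 0) q + eVec (0, 0, 1) q) / (Real.sqrt 2 : ℂ) = _
  push_cast
  ring

lemma ghz_eq_7 : ghzVec 7 = fun p => (eVec (1, 1, 0) p + ((-1:ℝ) : ℂ) * eVec (0, 0, 1) p) / (Real.sqrt 2 : ℂ) := by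
  funext q
  show (eVec (1, 1, 0) q - eVec (0, 0, 1) q) / (Real.sqrt 2 : ℂ) = _
  push_cast
  ring

lemma quad_0_0 : star (ghzVec 0) ⬝ᵥ (stabOp 0 *ᵥ ghzVec 0) = ((1 : ℝ) : ℂ) := by
  rw [ghz_eq_0, show stabOp 0 = PauliZ ⊗ₖ (PauliZ ⊗ₖ (1 : Matrix (Fin 2) (Fin 2) ℂ)) from rfl, qf]
  norm_num [PauliX, PauliY, PauliZ, Matrix.kroneckerMap_apply, Matrix.one_apply, eVec,
    Complex.I_mul_I]

lemma quad_0_1 : star (ghzVec 1) ⬝ᵥ (stabOp 0 *ᵥ ghzVec 1) = ((1 : ℝ) : ℂ) := by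
  rw [ghz_eq_1, show stabOp 0 = PauliZ ⊗ₖ (PauliZ ⊗ₖ (1 : Matrix (Fin 2) (Fin 2) ℂ)) from rfl, qf]
  norm_num [PauliX, PauliY, PauliZ, Matrix.kroneckerMap_apply, Matrix.one_apply, eVec,
    Complex.I_mul_I]

lemma quad_0_2 : star (ghzVec 2) ⬝ᵥ (stabOp 0 *ᵥ ghzVec 2) = ((-1 : ℝ) : ℂ) := by
  rw [ghz_eq_2, show stabOp 0 = PauliZ ⊗ₖ (PauliZ ⊗ₖ (1 : Matrix (Fin 2) (Fin 2) ℂ)) from rfl, qf]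
  norm_num [PauliX, PauliY, PauliZ, Matrix.kroneckerMap_apply, Matrix.one_apply, eVec,
    Complex.I_mul_I]

lemma quad_0_3 : star (ghzVec 3) ⬝ᵥ (stabOp 0 *ᵥ ghzVec 3) = ((-1 : ℝ) : ℂ) := by
  rw [ghz_eq_3, show stabOp 0 = PauliZ ⊗ₖ (PauliZ ⊗ₖ (1 : Matrix (Fin 2) (Fin 2) ℂ)) from rfl, qf]
  norm_num [PauliX, PauliY, PauliZ, Matrix.kroneckerMap_apply, Matrix.one_apply, eVec,
    Complex.I_mul_I]

lemma quad_0_4 : star (ghzVec 4) ⬝ᵥ (stabOp 0 *ᵥ ghzVec 4) = ((-1 : ℝ) : ℂ) := by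
  rw [ghz_eq_4, show stabOp 0 = PauliZ ⊗ₖ (PauliZ ⊗ₖ (1 : Matrix (Fin 2) (Fin 2) ℂ)) from rfl, qf]
  norm_num [PauliX, PauliY, PauliZ, Matrix.kroneckerMap_apply, Matrix.one_apply, eVec,
    Complex.I_mul_I]

lemma quad_0_5 : star (ghzVec 5) ⬝ᵥ (stabOp 0 *ᵥ ghzVec 5) = ((-1 : ℝ) : ℂ) := by
  rw [ghz_eq_5, show stabOp 0 = PauliZ ⊗ₖ (PauliZ ⊗ₖ (1 : Matrix (Fin 2) (Fin 2) ℂ)) from rfl, qf]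
  norm_num [PauliX, PauliY, PauliZ, Matrix.kroneckerMap_apply, Matrix.one_apply, eVec,
    Complex.I_mul_I]

lemma quad_0_6 : star (ghzVec 6) ⬝ᵥ (stabOp 0 *ᵥ ghzVec 6) = ((1 : ℝ) : ℂ) := by
  rw [ghz_eq_6, show stabOp 0 = PauliZ ⊗ₖ (PauliZ ⊗ₖ (1 : Matrix (Fin 2) (Fin 2) ℂ)) from rfl, qf]
  norm_num [PauliX, PauliY, PauliZ, Matrix.kroneckerMap_apply, Matrix.one_apply, eVec,
    Complex.I_mul_I]

lemma quad_0_7 : star (ghzVec 7) ⬝ᵥ (stabOp 0 *ᵥ ghzVec 7) = ((1 : ℝ) : ℂ) := by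
  rw [ghz_eq_7, show stabOp 0 = PauliZ ⊗ₖ (PauliZ ⊗ₖ (1 : Matrix (Fin 2) (Fin 2) ℂ)) from rfl, qf]
  norm_num [PauliX, PauliY, PauliZ, Matrix.kroneckerMap_apply, Matrix.one_apply, eVec,
    Complex.I_mul_I]

lemma quad_1_0 : star (ghzVec 0) ⬝ᵥ (stabOp 1 *ᵥ ghzVec 0) = ((1 : ℝ) : ℂ) := by
  rw [ghz_eq_0, show stabOp 1 = PauliZ ⊗ₖ ((1 : Matrix (Fin 2) (Fin 2) ℂ) ⊗ₖ PauliZ) from rfl, qf]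
  norm_num [PauliX, PauliY, PauliZ, Matrix.kroneckerMap_apply, Matrix.one_apply, eVec,
    Complex.I_mul_I]

lemma quad_1_1 : star (ghzVec 1) ⬝ᵥ (stabOp 1 *ᵥ ghzVec 1) = ((1 : ℝ) : ℂ) := by
  rw [ghz_eq_1, show stabOp 1 = PauliZ ⊗ₖ ((1 : Matrix (Fin 2) (Fin 2) ℂ) ⊗ₖ PauliZ) from rfl, qf]
  norm_num [PauliX, PauliY, PauliZ, Matrix.kroneckerMap_apply, Matrix.one_apply, eVec,
    Complex.I_mul_I]

lemma quad_1_2 : star (ghzVec 2) ⬝ᵥ (stabOp 1 *ᵥ ghzVec 2) = ((-1 : ℝ) : ℂ) := by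
  rw [ghz_eq_2, show stabOp 1 = PauliZ ⊗ₖ ((1 : Matrix (Fin 2) (Fin 2) ℂ) ⊗ₖ PauliZ) from rfl, qf]
  norm_num [PauliX, PauliY, PauliZ, Matrix.kroneckerMap_apply, Matrix.one_apply, eVec,
    Complex.I_mul_I]

lemma quad_1_3 : star (ghzVec 3) ⬝ᵥ (stabOp 1 *ᵥ ghzVec 3) = ((-1 : ℝ) : ℂ) := by
  rw [ghz_eq_3, show stabOp 1 = PauliZ ⊗ₖ ((1 : Matrix (Fin 2) (Fin 2) ℂ) ⊗ₖ PauliZ) from rfl, qf]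
  norm_num [PauliX, PauliY, PauliZ, Matrix.kroneckerMap_apply, Matrix.one_apply, eVec,
    Complex.I_mul_I]

lemma quad_1_4 : star (ghzVec 4) ⬝ᵥ (stabOp 1 *ᵥ ghzVec 4) = ((1 : ℝ) : ℂ) := by
  rw [ghz_eq_4, show stabOp 1 = PauliZ ⊗ₖ ((1 : Matrix (Fin 2) (Fin 2) ℂ) ⊗ₖ PauliZ) from rfl, qf]
  norm_num [PauliX, PauliY, PauliZ, Matrix.kroneckerMap_apply, Matrix.one_apply, eVec,
    Complex.I_mul_I]

lemma quad_1_5 : star (ghzVec 5) ⬝ᵥ (stabOp 1 *ᵥ ghzVec 5) = ((1 : ℝ) : ℂ) := by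
  rw [ghz_eq_5, show stabOp 1 = PauliZ ⊗ₖ ((1 : Matrix (Fin 2) (Fin 2) ℂ) ⊗ₖ PauliZ) from rfl, qf]
  norm_num [PauliX, PauliY, PauliZ, Matrix.kroneckerMap_apply, Matrix.one_apply, eVec,
    Complex.I_mul_I]

lemma quad_1_6 : star (ghzVec 6) ⬝ᵥ (stabOp 1 *ᵥ ghzVec 6) = ((-1 : ℝ) : ℂ) := by
  rw [ghz_eq_6, show stabOp 1 = PauliZ ⊗ₖ ((1 : Matrix (Fin 2) (Fin 2) ℂ) ⊗ₖ PauliZ) from rfl, qf]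
  norm_num [PauliX, PauliY, PauliZ, Matrix.kroneckerMap_apply, Matrix.one_apply, eVec,
    Complex.I_mul_I]

lemma quad_1_7 : star (ghzVec 7) ⬝ᵥ (stabOp 1 *ᵥ ghzVec 7) = ((-1 : ℝ) : ℂ) := by
  rw [ghz_eq_7, show stabOp 1 = PauliZ ⊗ₖ ((1 : Matrix (Fin 2) (Fin 2) ℂ) ⊗ₖ PauliZ) from rfl, qf]
  norm_num [PauliX, PauliY, PauliZ, Matrix.kroneckerMap_apply, Matrix.one_apply, eVec,
    Complex.I_mul_I]

lemma quad_2_0 : star (ghzVec 0) ⬝ᵥ (stabOp 2 *ᵥ ghzVec 0) = ((1 : ℝ) : ℂ) := by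
  rw [ghz_eq_0, show stabOp 2 = (1 : Matrix (Fin 2) (Fin 2) ℂ) ⊗ₖ (PauliZ ⊗ₖ PauliZ) from rfl, qf]
  norm_num [PauliX, PauliY, PauliZ, Matrix.kroneckerMap_apply, Matrix.one_apply, eVec,
    Complex.I_mul_I]

lemma quad_2_1 : star (ghzVec 1) ⬝ᵥ (stabOp 2 *ᵥ ghzVec 1) = ((1 : ℝ) : ℂ) := by
  rw [ghz_eq_1, show stabOp 2 = (1 : Matrix (Fin 2) (Fin 2) ℂ) ⊗ₖ (PauliZ ⊗ₖ PauliZ) from rfl, qf]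
  norm_num [PauliX, PauliY, PauliZ, Matrix.kroneckerMap_apply, Matrix.one_apply, eVec,
    Complex.I_mul_I]

lemma quad_2_2 : star (ghzVec 2) ⬝ᵥ (stabOp 2 *ᵥ ghzVec 2) = ((1 : ℝ) : ℂ) := by
  rw [ghz_eq_2, show stabOp 2 = (1 : Matrix (Fin 2) (Fin 2) ℂ) ⊗ₖ (PauliZ ⊗ₖ PauliZ) from rfl, qf]
  norm_num [PauliX, PauliY, PauliZ, Matrix.kroneckerMap_apply, Matrix.one_apply, eVec,
    Complex.I_mul_I]

lemma quad_2_3 : star (ghzVec 3) ⬝ᵥ (stabOp 2 *ᵥ ghzVec 3) = ((1 : ℝ) : ℂ) := by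
  rw [ghz_eq_3, show stabOp 2 = (1 : Matrix (Fin 2) (Fin 2) ℂ) ⊗ₖ (PauliZ ⊗ₖ PauliZ) from rfl, qf]
  norm_num [PauliX, PauliY, PauliZ, Matrix.kroneckerMap_apply, Matrix.one_apply, eVec,
    Complex.I_mul_I]

lemma quad_2_4 : star (ghzVec 4) ⬝ᵥ (stabOp 2 *ᵥ ghzVec 4) = ((-1 : ℝ) : ℂ) := by
  rw [ghz_eq_4, show stabOp 2 = (1 : Matrix (Fin 2) (Fin 2) ℂ) ⊗ₖ (PauliZ ⊗ₖ PauliZ) from rfl, qf]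
  norm_num [PauliX, PauliY, PauliZ, Matrix.kroneckerMap_apply, Matrix.one_apply, eVec,
    Complex.I_mul_I]

lemma quad_2_5 : star (ghzVec 5) ⬝ᵥ (stabOp 2 *ᵥ ghzVec 5) = ((-1 : ℝ) : ℂ) := by
  rw [ghz_eq_5, show stabOp 2 = (1 : Matrix (Fin 2) (Fin 2) ℂ) ⊗ₖ (PauliZ ⊗ₖ PauliZ) from rfl, qf]
  norm_num [PauliX, PauliY, PauliZ, Matrix.kroneckerMap_apply, Matrix.one_apply, eVec,
    Complex.I_mul_I]

lemma quad_2_6 : star (ghzVec 6) ⬝ᵥ (stabOp 2 *ᵥ ghzVec 6) = ((-1 : ℝ) : ℂ) := by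
  rw [ghz_eq_6, show stabOp 2 = (1 : Matrix (Fin 2) (Fin 2) ℂ) ⊗ₖ (PauliZ ⊗ₖ PauliZ) from rfl, qf]
  norm_num [PauliX, PauliY, PauliZ, Matrix.kroneckerMap_apply, Matrix.one_apply, eVec,
    Complex.I_mul_I]

lemma quad_2_7 : star (ghzVec 7) ⬝ᵥ (stabOp 2 *ᵥ ghzVec 7) = ((-1 : ℝ) : ℂ) := by
  rw [ghz_eq_7, show stabOp 2 = (1 : Matrix (Fin 2) (Fin 2) ℂ) ⊗ₖ (PauliZ ⊗ₖ PauliZ) from rfl, qf]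
  norm_num [PauliX, PauliY, PauliZ, Matrix.kroneckerMap_apply, Matrix.one_apply, eVec,
    Complex.I_mul_I]

lemma quad_3_0 : star (ghzVec 0) ⬝ᵥ (stabOp 3 *ᵥ ghzVec 0) = ((1 : ℝ) : ℂ) := by
  rw [ghz_eq_0, show stabOp 3 = PauliX ⊗ₖ (PauliX ⊗ₖ PauliX) from rfl, qf]
  norm_num [PauliX, PauliY, PauliZ, Matrix.kroneckerMap_apply, Matrix.one_apply, eVec,
    Complex.I_mul_I]

lemma quad_3_1 : star (ghzVec 1) ⬝ᵥ (stabOp 3 *ᵥ ghzVec 1) = ((-1 : ℝ) : ℂ) := by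
  rw [ghz_eq_1, show stabOp 3 = PauliX ⊗ₖ (PauliX ⊗ₖ PauliX) from rfl, qf]
  norm_num [PauliX, PauliY, PauliZ, Matrix.kroneckerMap_apply, Matrix.one_apply, eVec,
    Complex.I_mul_I]

lemma quad_3_2 : star (ghzVec 2) ⬝ᵥ (stabOp 3 *ᵥ ghzVec 2) = ((1 : ℝ) : ℂ) := by
  rw [ghz_eq_2, show stabOp 3 = PauliX ⊗ₖ (PauliX ⊗ₖ PauliX) from rfl, qf]
  norm_num [PauliX, PauliY, PauliZ, Matrix.kroneckerMap_apply, Matrix.one_apply, eVec,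
    Complex.I_mul_I]

lemma quad_3_3 : star (ghzVec 3) ⬝ᵥ (stabOp 3 *ᵥ ghzVec 3) = ((-1 : ℝ) : ℂ) := by
  rw [ghz_eq_3, show stabOp 3 = PauliX ⊗ₖ (PauliX ⊗ₖ PauliX) from rfl, qf]
  norm_num [PauliX, PauliY, PauliZ, Matrix.kroneckerMap_apply, Matrix.one_apply, eVec,
    Complex.I_mul_I]

lemma quad_3_4 : star (ghzVec 4) ⬝ᵥ (stabOp 3 *ᵥ ghzVec 4) = ((1 : ℝ) : ℂ) := by
  rw [ghz_eq_4, show stabOp 3 = PauliX ⊗ₖ (PauliX ⊗ₖ PauliX) from rfl, qf]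
  norm_num [PauliX, PauliY, PauliZ, Matrix.kroneckerMap_apply, Matrix.one_apply, eVec,
    Complex.I_mul_I]

lemma quad_3_5 : star (ghzVec 5) ⬝ᵥ (stabOp 3 *ᵥ ghzVec 5) = ((-1 : ℝ) : ℂ) := by
  rw [ghz_eq_5, show stabOp 3 = PauliX ⊗ₖ (PauliX ⊗ₖ PauliX) from rfl, qf]
  norm_num [PauliX, PauliY, PauliZ, Matrix.kroneckerMap_apply, Matrix.one_apply, eVec,
    Complex.I_mul_I]

lemma quad_3_6 : star (ghzVec 6) ⬝ᵥ (stabOp 3 *ᵥ ghzVec 6) = ((1 : ℝ) : ℂ) := by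
  rw [ghz_eq_6, show stabOp 3 = PauliX ⊗ₖ (PauliX ⊗ₖ PauliX) from rfl, qf]
  norm_num [PauliX, PauliY, PauliZ, Matrix.kroneckerMap_apply, Matrix.one_apply, eVec,
    Complex.I_mul_I]

lemma quad_3_7 : star (ghzVec 7) ⬝ᵥ (stabOp 3 *ᵥ ghzVec 7) = ((-1 : ℝ) : ℂ) := by
  rw [ghz_eq_7, show stabOp 3 = PauliX ⊗ₖ (PauliX ⊗ₖ PauliX) from rfl, qf]
  norm_num [PauliX, PauliY, PauliZ, Matrix.kroneckerMap_apply, Matrix.one_apply, eVec,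
    Complex.I_mul_I]

lemma quad_4_0 : star (ghzVec 0) ⬝ᵥ (stabOp 4 *ᵥ ghzVec 0) = ((1 : ℝ) : ℂ) := by
  rw [ghz_eq_0, show stabOp 4 = -(PauliY ⊗ₖ (PauliY ⊗ₖ PauliX)) from rfl, qf]
  norm_num [PauliX, PauliY, PauliZ, Matrix.kroneckerMap_apply, Matrix.one_apply, eVec,
    Complex.I_mul_I]

lemma quad_4_1 : star (ghzVec 1) ⬝ᵥ (stabOp 4 *ᵥ ghzVec 1) = ((-1 : ℝ) : ℂ) := by
  rw [ghz_eq_1, show stabOp 4 = -(PauliY ⊗ₖ (PauliY ⊗ₖ PauliX)) from rfl, qf]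
  norm_num [PauliX, PauliY, PauliZ, Matrix.kroneckerMap_apply, Matrix.one_apply, eVec,
    Complex.I_mul_I]

lemma quad_4_2 : star (ghzVec 2) ⬝ᵥ (stabOp 4 *ᵥ ghzVec 2) = ((-1 : ℝ) : ℂ) := by
  rw [ghz_eq_2, show stabOp 4 = -(PauliY ⊗ₖ (PauliY ⊗ₖ PauliX)) from rfl, qf]
  norm_num [PauliX, PauliY, PauliZ, Matrix.kroneckerMap_apply, Matrix.one_apply, eVec,
    Complex.I_mul_I]

lemma quad_4_3 : star (ghzVec 3) ⬝ᵥ (stabOp 4 *ᵥ ghzVec 3) = ((1 : ℝ) : ℂ) := by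
  rw [ghz_eq_3, show stabOp 4 = -(PauliY ⊗ₖ (PauliY ⊗ₖ PauliX)) from rfl, qf]
  norm_num [PauliX, PauliY, PauliZ, Matrix.kroneckerMap_apply, Matrix.one_apply, eVec,
    Complex.I_mul_I]

lemma quad_4_4 : star (ghzVec 4) ⬝ᵥ (stabOp 4 *ᵥ ghzVec 4) = ((-1 : ℝ) : ℂ) := by
  rw [ghz_eq_4, show stabOp 4 = -(PauliY ⊗ₖ (PauliY ⊗ₖ PauliX)) from rfl, qf]
  norm_num [PauliX, PauliY, PauliZ, Matrix.kroneckerMap_apply, Matrix.one_apply, eVec,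
    Complex.I_mul_I]

lemma quad_4_5 : star (ghzVec 5) ⬝ᵥ (stabOp 4 *ᵥ ghzVec 5) = ((1 : ℝ) : ℂ) := by
  rw [ghz_eq_5, show stabOp 4 = -(PauliY ⊗ₖ (PauliY ⊗ₖ PauliX)) from rfl, qf]
  norm_num [PauliX, PauliY, PauliZ, Matrix.kroneckerMap_apply, Matrix.one_apply, eVec,
    Complex.I_mul_I]

lemma quad_4_6 : star (ghzVec 6) ⬝ᵥ (stabOp 4 *ᵥ ghzVec 6) = ((1 : ℝ) : ℂ) := by
  rw [ghz_eq_6, show stabOp 4 = -(PauliY ⊗ₖ (PauliY ⊗ₖ PauliX)) from rfl, qf]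
  norm_num [PauliX, PauliY, PauliZ, Matrix.kroneckerMap_apply, Matrix.one_apply, eVec,
    Complex.I_mul_I]

lemma quad_4_7 : star (ghzVec 7) ⬝ᵥ (stabOp 4 *ᵥ ghzVec 7) = ((-1 : ℝ) : ℂ) := by
  rw [ghz_eq_7, show stabOp 4 = -(PauliY ⊗ₖ (PauliY ⊗ₖ PauliX)) from rfl, qf]
  norm_num [PauliX, PauliY, PauliZ, Matrix.kroneckerMap_apply, Matrix.one_apply, eVec,
    Complex.I_mul_I]

lemma quad_5_0 : star (ghzVec 0) ⬝ᵥ (stabOp 5 *ᵥ ghzVec 0) = ((1 : ℝ) : ℂ) := by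
  rw [ghz_eq_0, show stabOp 5 = -(PauliY ⊗ₖ (PauliX ⊗ₖ PauliY)) from rfl, qf]
  norm_num [PauliX, PauliY, PauliZ, Matrix.kroneckerMap_apply, Matrix.one_apply, eVec,
    Complex.I_mul_I]

lemma quad_5_1 : star (ghzVec 1) ⬝ᵥ (stabOp 5 *ᵥ ghzVec 1) = ((-1 : ℝ) : ℂ) := by
  rw [ghz_eq_1, show stabOp 5 = -(PauliY ⊗ₖ (PauliX ⊗ₖ PauliY)) from rfl, qf]
  norm_num [PauliX, PauliY, PauliZ, Matrix.kroneckerMap_apply, Matrix.one_apply, eVec,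
    Complex.I_mul_I]

lemma quad_5_2 : star (ghzVec 2) ⬝ᵥ (stabOp 5 *ᵥ ghzVec 2) = ((-1 : ℝ) : ℂ) := by
  rw [ghz_eq_2, show stabOp 5 = -(PauliY ⊗ₖ (PauliX ⊗ₖ PauliY)) from rfl, qf]
  norm_num [PauliX, PauliY, PauliZ, Matrix.kroneckerMap_apply, Matrix.one_apply, eVec,
    Complex.I_mul_I]

lemma quad_5_3 : star (ghzVec 3) ⬝ᵥ (stabOp 5 *ᵥ ghzVec 3) = ((1 : ℝ) : ℂ) := by
  rw [ghz_eq_3, show stabOp 5 = -(PauliY ⊗ₖ (PauliX ⊗ₖ PauliY)) from rfl, qf]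
  norm_num [PauliX, PauliY, PauliZ, Matrix.kroneckerMap_apply, Matrix.one_apply, eVec,
    Complex.I_mul_I]

lemma quad_5_4 : star (ghzVec 4) ⬝ᵥ (stabOp 5 *ᵥ ghzVec 4) = ((1 : ℝ) : ℂ) := by
  rw [ghz_eq_4, show stabOp 5 = -(PauliY ⊗ₖ (PauliX ⊗ₖ PauliY)) from rfl, qf]
  norm_num [PauliX, PauliY, PauliZ, Matrix.kroneckerMap_apply, Matrix.one_apply, eVec,
    Complex.I_mul_I]

lemma quad_5_5 : star (ghzVec 5) ⬝ᵥ (stabOp 5 *ᵥ ghzVec 5) = ((-1 : ℝ) : ℂ) := by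
  rw [ghz_eq_5, show stabOp 5 = -(PauliY ⊗ₖ (PauliX ⊗ₖ PauliY)) from rfl, qf]
  norm_num [PauliX, PauliY, PauliZ, Matrix.kroneckerMap_apply, Matrix.one_apply, eVec,
    Complex.I_mul_I]

lemma quad_5_6 : star (ghzVec 6) ⬝ᵥ (stabOp 5 *ᵥ ghzVec 6) = ((-1 : ℝ) : ℂ) := by
  rw [ghz_eq_6, show stabOp 5 = -(PauliY ⊗ₖ (PauliX ⊗ₖ PauliY)) from rfl, qf]
  norm_num [PauliX, PauliY, PauliZ, Matrix.kroneckerMap_apply, Matrix.one_apply, eVec,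
    Complex.I_mul_I]

lemma quad_5_7 : star (ghzVec 7) ⬝ᵥ (stabOp 5 *ᵥ ghzVec 7) = ((1 : ℝ) : ℂ) := by
  rw [ghz_eq_7, show stabOp 5 = -(PauliY ⊗ₖ (PauliX ⊗ₖ PauliY)) from rfl, qf]
  norm_num [PauliX, PauliY, PauliZ, Matrix.kroneckerMap_apply, Matrix.one_apply, eVec,
    Complex.I_mul_I]

lemma quad_6_0 : star (ghzVec 0) ⬝ᵥ (stabOp 6 *ᵥ ghzVec 0) = ((1 : ℝ) : ℂ) := by
  rw [ghz_eq_0, show stabOp 6 = -(PauliX ⊗ₖ (PauliY ⊗ₖ PauliY)) from rfl, qf]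
  norm_num [PauliX, PauliY, PauliZ, Matrix.kroneckerMap_apply, Matrix.one_apply, eVec,
    Complex.I_mul_I]

lemma quad_6_1 : star (ghzVec 1) ⬝ᵥ (stabOp 6 *ᵥ ghzVec 1) = ((-1 : ℝ) : ℂ) := by
  rw [ghz_eq_1, show stabOp 6 = -(PauliX ⊗ₖ (PauliY ⊗ₖ PauliY)) from rfl, qf]
  norm_num [PauliX, PauliY, PauliZ, Matrix.kroneckerMap_apply, Matrix.one_apply, eVec,
    Complex.I_mul_I]

lemma quad_6_2 : star (ghzVec 2) ⬝ᵥ (stabOp 6 *ᵥ ghzVec 2) = ((1 : ℝ) : ℂ) := by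
  rw [ghz_eq_2, show stabOp 6 = -(PauliX ⊗ₖ (PauliY ⊗ₖ PauliY)) from rfl, qf]
  norm_num [PauliX, PauliY, PauliZ, Matrix.kroneckerMap_apply, Matrix.one_apply, eVec,
    Complex.I_mul_I]

lemma quad_6_3 : star (ghzVec 3) ⬝ᵥ (stabOp 6 *ᵥ ghzVec 3) = ((-1 : ℝ) : ℂ) := by
  rw [ghz_eq_3, show stabOp 6 = -(PauliX ⊗ₖ (PauliY ⊗ₖ PauliY)) from rfl, qf]
  norm_num [PauliX, PauliY, PauliZ, Matrix.kroneckerMap_apply, Matrix.one_apply, eVec,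
    Complex.I_mul_I]

lemma quad_6_4 : star (ghzVec 4) ⬝ᵥ (stabOp 6 *ᵥ ghzVec 4) = ((-1 : ℝ) : ℂ) := by
  rw [ghz_eq_4, show stabOp 6 = -(PauliX ⊗ₖ (PauliY ⊗ₖ PauliY)) from rfl, qf]
  norm_num [PauliX, PauliY, PauliZ, Matrix.kroneckerMap_apply, Matrix.one_apply, eVec,
    Complex.I_mul_I]

lemma quad_6_5 : star (ghzVec 5) ⬝ᵥ (stabOp 6 *ᵥ ghzVec 5) = ((1 : ℝ) : ℂ) := by
  rw [ghz_eq_5, show stabOp 6 = -(PauliX ⊗ₖ (PauliY ⊗ₖ PauliY)) from rfl, qf]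
  norm_num [PauliX, PauliY, PauliZ, Matrix.kroneckerMap_apply, Matrix.one_apply, eVec,
    Complex.I_mul_I]

lemma quad_6_6 : star (ghzVec 6) ⬝ᵥ (stabOp 6 *ᵥ ghzVec 6) = ((-1 : ℝ) : ℂ) := by
  rw [ghz_eq_6, show stabOp 6 = -(PauliX ⊗ₖ (PauliY ⊗ₖ PauliY)) from rfl, qf]
  norm_num [PauliX, PauliY, PauliZ, Matrix.kroneckerMap_apply, Matrix.one_apply, eVec,
    Complex.I_mul_I]

lemma quad_6_7 : star (ghzVec 7) ⬝ᵥ (stabOp 6 *ᵥ ghzVec 7) = ((1 : ℝ) : ℂ) := by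
  rw [ghz_eq_7, show stabOp 6 = -(PauliX ⊗ₖ (PauliY ⊗ₖ PauliY)) from rfl, qf]
  norm_num [PauliX, PauliY, PauliZ, Matrix.kroneckerMap_apply, Matrix.one_apply, eVec,
    Complex.I_mul_I]

lemma trace_outer {n : Type*} [Fintype n] (a b : n → ℂ) (O : Matrix n n ℂ) :
    (Matrix.vecMulVec a b * O).trace = b ⬝ᵥ (O *ᵥ a) := by
  simp only [Matrix.trace, Matrix.diag, Matrix.mul_apply, Matrix.vecMulVec_apply,
    dotProduct, Matrix.mulVec]
  rw [Finset.sum_comm]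
  refine Finset.sum_congr rfl fun y _ => ?_
  rw [Finset.mul_sum]
  refine Finset.sum_congr rfl fun x _ => ?_
  ring

lemma trace_eq (p : Fin 8 → ℝ) (O : Matrix (Fin 2 × Fin 2 × Fin 2) (Fin 2 × Fin 2 × Fin 2) ℂ) :
    (ghzDiagState p * O).trace = ∑ j, (p j : ℂ) * (star (ghzVec j) ⬝ᵥ (O *ᵥ ghzVec j)) := by
  simp only [ghzDiagState, Finset.sum_mul, Matrix.trace_sum, Matrix.smul_mul, Matrix.trace_smul,
    trace_outer, smul_eq_mul]

lemma trace_0 (p : Fin 8 → ℝ) :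
    ((ghzDiagState p * stabOp 0).trace) = ((p 0 + p 1 - p 2 - p 3 - p 4 - p 5 + p 6 + p 7 : ℝ) : ℂ) := by
  rw [trace_eq, Fin.sum_univ_eight, quad_0_0, quad_0_1, quad_0_2, quad_0_3, quad_0_4, quad_0_5, quad_0_6, quad_0_7]
  push_cast
  ring

lemma trace_1 (p : Fin 8 → ℝ) :
    ((ghzDiagState p * stabOp 1).trace) = ((p 0 + p 1 - p 2 - p 3 + p 4 + p 5 - p 6 - p 7 : ℝ) : ℂ) := by
  rw [trace_eq, Fin.sum_univ_eight, quad_1_0, quad_1_1, quad_1_2, quad_1_3, quad_1_4, quad_1_5, quad_1_6, quad_1_7]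
  push_cast
  ring

lemma trace_2 (p : Fin 8 → ℝ) :
    ((ghzDiagState p * stabOp 2).trace) = ((p 0 + p 1 + p 2 + p 3 - p 4 - p 5 - p 6 - p 7 : ℝ) : ℂ) := by
  rw [trace_eq, Fin.sum_univ_eight, quad_2_0, quad_2_1, quad_2_2, quad_2_3, quad_2_4, quad_2_5, quad_2_6, quad_2_7]
  push_cast
  ring

lemma trace_3 (p : Fin 8 → ℝ) :
    ((ghzDiagState p * stabOp 3).trace) = ((p 0 - p 1 + p 2 - p 3 + p 4 - p 5 + p 6 - p 7 : ℝ) : ℂ) := by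
  rw [trace_eq, Fin.sum_univ_eight, quad_3_0, quad_3_1, quad_3_2, quad_3_3, quad_3_4, quad_3_5, quad_3_6, quad_3_7]
  push_cast
  ring

lemma trace_4 (p : Fin 8 → ℝ) :
    ((ghzDiagState p * stabOp 4).trace) = ((p 0 - p 1 - p 2 + p 3 - p 4 + p 5 + p 6 - p 7 : ℝ) : ℂ) := by
  rw [trace_eq, Fin.sum_univ_eight, quad_4_0, quad_4_1, quad_4_2, quad_4_3, quad_4_4, quad_4_5, quad_4_6, quad_4_7]
  push_cast
  ring

lemma trace_5 (p : Fin 8 → ℝ) :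
    ((ghzDiagState p * stabOp 5).trace) = ((p 0 - p 1 - p 2 + p 3 + p 4 - p 5 - p 6 + p 7 : ℝ) : ℂ) := by
  rw [trace_eq, Fin.sum_univ_eight, quad_5_0, quad_5_1, quad_5_2, quad_5_3, quad_5_4, quad_5_5, quad_5_6, quad_5_7]
  push_cast
  ring

lemma trace_6 (p : Fin 8 → ℝ) :
    ((ghzDiagState p * stabOp 6).trace) = ((p 0 - p 1 + p 2 - p 3 - p 4 + p 5 - p 6 + p 7 : ℝ) : ℂ) := by
  rw [trace_eq, Fin.sum_univ_eight, quad_6_0, quad_6_1, quad_6_2, quad_6_3, quad_6_4, quad_6_5, quad_6_6, quad_6_7]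
  push_cast
  ring

set_option maxHeartbeats 4000000 in
lemma key (a b c d e f g h : ℝ) (ha : 0 ≤ a) (hb : 0 ≤ b) (hc : 0 ≤ c) (hd : 0 ≤ d)
    (he : 0 ≤ e) (hf : 0 ≤ f) (hg : 0 ≤ g) (hh : 0 ≤ h)
    (hs : a + b + c + d + e + f + g + h = 1)
    (b1 : a ≤ 1/2) (b2 : b ≤ 1/2) (b3 : c ≤ 1/2) (b4 : d ≤ 1/2)
    (b5 : e ≤ 1/2) (b6 : f ≤ 1/2) (b7 : g ≤ 1/2) (b8 : h ≤ 1/2) :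
    |a + b - c - d - e - f + g + h| + |a + b - c - d + e + f - g - h| + |a + b + c + d - e - f - g - h| + |a - b + c - d + e - f + g - h|
      + |a - b - c + d - e + f + g - h| + |a - b - c + d + e - f - g + h| + |a - b + c - d - e + f - g + h| ≤ 3 := by
  rcases abs_cases (a + b - c - d - e - f + g + h) with ⟨e0,s0⟩|⟨e0,s0⟩ <;>
  rcases abs_cases (a + b - c - d + e + f - g - h) with ⟨e1,s1⟩|⟨e1,s1⟩ <;>
  rcases abs_cases (a + b + c + d - e - f - g - h) with ⟨e2,s2⟩|⟨e2,s2⟩ <;>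
  rcases abs_cases (a - b + c - d + e - f + g - h) with ⟨e3,s3⟩|⟨e3,s3⟩ <;>
  rcases abs_cases (a - b - c + d - e + f + g - h) with ⟨e4,s4⟩|⟨e4,s4⟩ <;>
  rcases abs_cases (a - b - c + d + e - f - g + h) with ⟨e5,s5⟩|⟨e5,s5⟩ <;>
  rcases abs_cases (a - b + c - d - e + f - g + h) with ⟨e6,s6⟩|⟨e6,s6⟩ <;>
  rw [e0,e1,e2,e3,e4,e5,e6] <;> linarith

/-- A GHZ diagonal state has some weight exceeding 1/2 (i.e. is genuinely tripartite entangled)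
iff the sum of the absolute expectations of the seven stabilizers exceeds 3. -/
theorem stmt_17 (p : Fin 8 → ℝ) (hp : ∀ i, 0 ≤ p i) (hsum : ∑ i, p i = 1) :
    (∃ i, 1 / 2 < p i) ↔
      3 < ∑ i : Fin 7, ‖(ghzDiagState p * stabOp i).trace‖ := by
  have h0 := trace_0 p
  have h1 := trace_1 p
  have h2 := trace_2 p
  have h3 := trace_3 p
  have h4 := trace_4 p
  have h5 := trace_5 p
  have h6 := trace_6 p
  rw [Fin.sum_univ_seven, h0, h1, h2, h3, h4, h5, h6]
  simp only [Complex.norm_real, Real.norm_eq_abs]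
  rw [Fin.sum_univ_eight] at hsum
  constructor
  · rintro ⟨i, hi⟩
    have hcase := (by decide : ∀ i : Fin 8, i = 0 ∨ i = 1 ∨ i = 2 ∨ i = 3 ∨ i = 4 ∨ i = 5 ∨ i = 6 ∨ i = 7) i
    have A0 := le_abs_self (p 0 + p 1 - p 2 - p 3 - p 4 - p 5 + p 6 + p 7)
    have B0 := neg_abs_le (p 0 + p 1 - p 2 - p 3 - p 4 - p 5 + p 6 + p 7)
    have A1 := le_abs_self (p 0 + p 1 - p 2 - p 3 + p 4 + p 5 - p 6 - p 7)
    have B1 := neg_abs_le (p 0 + p 1 - p 2 - p 3 + p 4 + p 5 - p 6 - p 7)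
    have A2 := le_abs_self (p 0 + p 1 + p 2 + p 3 - p 4 - p 5 - p 6 - p 7)
    have B2 := neg_abs_le (p 0 + p 1 + p 2 + p 3 - p 4 - p 5 - p 6 - p 7)
    have A3 := le_abs_self (p 0 - p 1 + p 2 - p 3 + p 4 - p 5 + p 6 - p 7)
    have B3 := neg_abs_le (p 0 - p 1 + p 2 - p 3 + p 4 - p 5 + p 6 - p 7)
    have A4 := le_abs_self (p 0 - p 1 - p 2 + p 3 - p 4 + p 5 + p 6 - p 7)
    have B4 := neg_abs_le (p 0 - p 1 - p 2 + p 3 - p 4 + p 5 + p 6 - p 7)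
    have A5 := le_abs_self (p 0 - p 1 - p 2 + p 3 + p 4 - p 5 - p 6 + p 7)
    have B5 := neg_abs_le (p 0 - p 1 - p 2 + p 3 + p 4 - p 5 - p 6 + p 7)
    have A6 := le_abs_self (p 0 - p 1 + p 2 - p 3 - p 4 + p 5 - p 6 + p 7)
    have B6 := neg_abs_le (p 0 - p 1 + p 2 - p 3 - p 4 + p 5 - p 6 + p 7)
    rcases hcase with rfl|rfl|rfl|rfl|rfl|rfl|rfl|rfl <;> linarith
  · contrapose!
    intro hball
    exact key (p 0) (p 1) (p 2) (p 3) (p 4) (p 5) (p 6) (p 7) (hp 0) (hp 1) (hp 2) (hp 3)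
      (hp 4) (hp 5) (hp 6) (hp 7) hsum (hball 0) (hball 1) (hball 2) (hball 3) (hball 4)
      (hball 5) (hball 6) (hball 7)

end
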